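/- If n is prime and Γ is a vertex-transitive graph on n vertices with ω(Γ)·α(Γ) = n, then Γ is null or complete. Consequently, every vertex-transitive graph of prime order that is neither null nor complete satisfies ω(Γ)·α(Γ) < n. -/

import Mathlib

open SimpleGraph

/-- The independence number of a graph: the clique number of its complement. -/
noncomputable def SimpleGraph.indepNum' {V : Type*} (G : SimpleGraph V) : ℕ :=
  Gᶜ.cliqueNum

/-- A graph is vertex-transitive if its automorphism group is transitive on vertices. -/
def SimpleGraph.IsVertexTransitive {V : Type*} (G : SimpleGraph V) : Prop :=
  ∀ u v : V, ∃ φ : G ≃g G, φ u = v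

private lemma eq_bot_of_cliqueNum_le_one {V : Type*} [Fintype V] (G : SimpleGraph V)
    (h : G.cliqueNum ≤ 1) : G = ⊥ := by
  classical
  ext u v
  simp only [SimpleGraph.bot_adj, iff_false]
  intro hadj
  have hne : u ≠ v := hadj.ne
  have hclique : G.IsClique (({u, v} : Finset V) : Set V) := by
    simp only [Finset.coe_insert, Finset.coe_singleton]
    exact SimpleGraph.isClique_pair.mpr fun _ => hadj
  have hcard : ({u, v} : Finset V).card = 2 := Finset.card_pair hne
  have := SimpleGraph.IsClique.card_le_cliqueNum (tc := hclique)
  omega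

open Finset in
private lemma clique_coclique {V : Type*} [Fintype V] (G : SimpleGraph V)
    (hvt : G.IsVertexTransitive) : G.cliqueNum * G.indepNum' ≤ Fintype.card V := by
  classical
  obtain ⟨C, hC⟩ := G.exists_isNClique_cliqueNum
  obtain ⟨I, hI⟩ := Gᶜ.exists_isNClique_cliqueNum
  haveI : Fintype (G ≃g G) :=
    Fintype.ofInjective (fun φ : G ≃g G => φ.toEquiv)
      (fun a b h => by cases a; cases b; simpa using h)
  set n := Fintype.card V with hn
  set A : Finset (G ≃g G) := Finset.univ with hA
  set k : V → V → ℕ := fun c i => (A.filter (fun φ : G ≃g G => φ c = i)).card with hk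
  -- k is constant in its second argument
  have hconst : ∀ c i j : V, k c i = k c j := by
    intro c i j
    obtain ⟨ψ, hψ⟩ := hvt i j
    refine Finset.card_bij' (fun φ _ => φ.trans ψ) (fun φ _ => φ.trans ψ.symm) ?_ ?_ ?_ ?_
    · intro φ hφ
      simp only [Finset.mem_filter, Finset.mem_univ, true_and, hA] at hφ ⊢
      show ψ (φ c) = j
      rw [hφ, hψ]
    · intro φ hφ
      simp only [Finset.mem_filter, Finset.mem_univ, true_and, hA] at hφ ⊢
      show ψ.symm (φ c) = i
      rw [hφ, ← hψ, RelIso.symm_apply_apply]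
    · intro φ _
      ext x
      show ψ.symm (ψ (φ x)) = φ x
      rw [RelIso.symm_apply_apply]
    · intro φ _
      ext x
      show ψ (ψ.symm (φ x)) = φ x
      rw [RelIso.apply_symm_apply]
  have hfib : ∀ c : V, ∑ j : V, k c j = A.card := by
    intro c
    exact (Finset.card_eq_sum_card_fiberwise
      (f := fun φ : G ≃g G => φ c) (t := Finset.univ)
      (fun φ _ => Finset.mem_univ _)).symm
  have hkey : ∀ c i : V, n * k c i = A.card := by
    intro c i
    calc n * k c i = ∑ _j : V, k c i := by
          rw [Finset.sum_const, Finset.card_univ, smul_eq_mul, hn]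
      _ = ∑ j : V, k c j := Finset.sum_congr rfl fun j _ => (hconst c j i).symm
      _ = A.card := hfib c
  -- the double count
  set T : ℕ := ∑ φ ∈ A, ((C ×ˢ I).filter (fun p => φ p.1 = p.2)).card with hT
  have hupper : T ≤ A.card := by
    rw [hT]
    calc ∑ φ ∈ A, ((C ×ˢ I).filter (fun p => φ p.1 = p.2)).card
        ≤ ∑ _φ ∈ A, 1 := by
          refine Finset.sum_le_sum fun φ _ => ?_
          rw [Finset.card_le_one]
          rintro ⟨c, i⟩ hp ⟨c', i'⟩ hq
          simp only [Finset.mem_filter, Finset.mem_product] at hp hq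
          obtain ⟨⟨hc, hi⟩, hφc⟩ := hp
          obtain ⟨⟨hc', hi'⟩, hφc'⟩ := hq
          by_cases hcc : c = c'
          · subst hcc; rw [← hφc, ← hφc']
          · exfalso
            have hadj : G.Adj c c' := hC.isClique hc hc' hcc
            have hadj2 : G.Adj (φ c) (φ c') := φ.map_rel_iff.mpr hadj
            have hne : (φ c) ≠ (φ c') := hadj2.ne
            have : Gᶜ.Adj i i' := hI.isClique hi hi' (by rw [← hφc, ← hφc']; exact hne)
            rw [SimpleGraph.compl_adj] at this
            rw [hφc, hφc'] at hadj2
            exact this.2 hadj2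
      _ = A.card := by simp
  have hswap : T = ∑ p ∈ C ×ˢ I, k p.1 p.2 := by
    rw [hT]
    simp only [Finset.card_filter]
    rw [Finset.sum_comm]
    exact Finset.sum_congr rfl fun p _ => (Finset.card_filter _ _).symm
  have hmul : n * T = C.card * I.card * A.card := by
    rw [hswap, Finset.mul_sum]
    calc ∑ p ∈ C ×ˢ I, n * k p.1 p.2 = ∑ _p ∈ C ×ˢ I, A.card :=
          Finset.sum_congr rfl fun p _ => hkey p.1 p.2
      _ = C.card * I.card * A.card := by
          rw [Finset.sum_const, Finset.card_product, smul_eq_mul]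
  have hApos : 0 < A.card := by
    rw [hA, Finset.card_univ]
    exact Fintype.card_pos_iff.mpr ⟨RelIso.refl G.Adj⟩
  have : C.card * I.card * A.card ≤ n * A.card := by
    rw [← hmul]
    exact Nat.mul_le_mul_left n hupper
  have hfinal : C.card * I.card ≤ n := Nat.le_of_mul_le_mul_right this hApos
  rwa [hC.card_eq, hI.card_eq] at hfinal

/-- If `Γ` is a vertex-transitive graph on a prime number `n` of vertices with
`ω(Γ)·α(Γ) = n`, then `Γ` is null or complete; consequently every vertex-transitive
graph of prime order which is neither null nor complete has `ω(Γ)·α(Γ) < n`. -/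
theorem stmt_6 {V : Type*} [Fintype V] (G : SimpleGraph V)
    (hvt : G.IsVertexTransitive) (hp : (Fintype.card V).Prime) :
    (G.cliqueNum * G.indepNum' = Fintype.card V → G = ⊥ ∨ G = ⊤) ∧
      (G ≠ ⊥ → G ≠ ⊤ → G.cliqueNum * G.indepNum' < Fintype.card V) := by
  have key : G.cliqueNum * G.indepNum' = Fintype.card V → G = ⊥ ∨ G = ⊤ := by
    intro h
    have hdvd : G.cliqueNum ∣ Fintype.card V := ⟨G.indepNum', h.symm⟩
    rcases (hp.eq_one_or_self_of_dvd _ hdvd) with h1 | h2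
    · left
      exact eq_bot_of_cliqueNum_le_one G h1.le
    · right
      have hα : G.indepNum' = 1 := by
        rw [h2] at h
        have hpos : 0 < Fintype.card V := hp.pos
        nlinarith [h, hp.one_lt]
      have : Gᶜ = ⊥ := eq_bot_of_cliqueNum_le_one Gᶜ hα.le
      rw [← compl_compl G, this, compl_bot]
  refine ⟨key, fun hb ht => ?_⟩
  have hle := clique_coclique G hvt
  rcases lt_or_eq_of_le hle with hlt | heq
  · exact hlt
  · rcases key heq with h | h
    · exact absurd h hb
    · exact absurd h ht
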